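/- Let A, Q : ℝ → Matrix (Fin n) (Fin n) ℝ and B : ℝ → Matrix (Fin n) (Fin m) ℝ, and let X, Y : ℝ → Matrix (Fin n) (Fin n) ℝ satisfy, for every t in an open set U ⊆ ℝ, HasDerivAt X (A(t)·X(t) − B(t)·B(t)ᵀ·Y(t)) t and HasDerivAt Y (−Q(t)·X(t) − A(t)ᵀ·Y(t)) t, with X(t) invertible for all t ∈ U. Then the matrix fraction Π(t) := Y(t)·X(t)⁻¹ satisfies, for every t ∈ U, HasDerivAt Π (−(A(t)ᵀ·Π(t) + Π(t)·A(t) − Π(t)·B(t)·B(t)ᵀ·Π(t) + Q(t))) t; that is, Π solves the matrix Riccati differential equation −Π̇ = AᵀΠ + ΠA − ΠBBᵀΠ + Q. -/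

import Mathlib

open Matrix

attribute [instance] Matrix.normedAddCommGroup Matrix.normedSpace

section Aux

variable {p q r : ℕ}

theorem hasDerivAt_matrix {M : ℝ → Matrix (Fin p) (Fin q) ℝ}
    {M' : Matrix (Fin p) (Fin q) ℝ} {t : ℝ} :
    HasDerivAt M M' t ↔ ∀ i j, HasDerivAt (fun s => M s i j) (M' i j) t := by
  constructor
  · intro h i j
    exact hasDerivAt_pi.1 (hasDerivAt_pi.1 h i) j
  · intro h
    exact hasDerivAt_pi.2 fun i => hasDerivAt_pi.2 fun j => h i j

theorem HasDerivAt.matrix_mul {M : ℝ → Matrix (Fin p) (Fin q) ℝ}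
    {N : ℝ → Matrix (Fin q) (Fin r) ℝ}
    {M' : Matrix (Fin p) (Fin q) ℝ} {N' : Matrix (Fin q) (Fin r) ℝ} {t : ℝ}
    (hM : HasDerivAt M M' t) (hN : HasDerivAt N N' t) :
    HasDerivAt (fun s => M s * N s) (M' * N t + M t * N') t := by
  rw [hasDerivAt_matrix] at *
  intro i j
  simp only [Matrix.mul_apply, Matrix.add_apply]
  have : (∑ k, M' i k * N t k j) + ∑ k, M t i k * N' k j
      = ∑ k, (M' i k * N t k j + M t i k * N' k j) := by rw [Finset.sum_add_distrib]
  rw [this]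
  exact HasDerivAt.fun_sum fun k _ => (hM i k).mul (hN k j)

theorem differentiableAt_det {M : ℝ → Matrix (Fin p) (Fin p) ℝ} {t : ℝ}
    (h : ∀ i j, DifferentiableAt ℝ (fun s => M s i j) t) :
    DifferentiableAt ℝ (fun s => (M s).det) t := by
  simp only [Matrix.det_apply']
  exact DifferentiableAt.fun_sum fun σ _ => ((DifferentiableAt.fun_finsetProd
    (u := Finset.univ) (fun i _ => h (σ i) i)).const_mul _)

theorem differentiableAt_adjugate {M : ℝ → Matrix (Fin p) (Fin p) ℝ} {t : ℝ}
    (h : ∀ i j, DifferentiableAt ℝ (fun s => M s i j) t) (i j : Fin p) :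
    DifferentiableAt ℝ (fun s => (M s).adjugate i j) t := by
  simp only [Matrix.adjugate_apply]
  apply differentiableAt_det
  intro k l
  simp only [Matrix.updateRow_apply]
  by_cases hk : k = j
  · simp [hk]
  · simp [hk]; exact h k l

theorem differentiableAt_inv_matrix {M : ℝ → Matrix (Fin p) (Fin p) ℝ} {t : ℝ}
    (h : ∀ i j, DifferentiableAt ℝ (fun s => M s i j) t)
    (hdet : (M t).det ≠ 0) :
    DifferentiableAt ℝ (fun s => (M s)⁻¹) t := by
  refine differentiableAt_pi.2 ?_
  intro i
  rw [differentiableAt_pi]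
  intro j
  have : (fun s => (M s)⁻¹ i j) = fun s => ((M s).det)⁻¹ * (M s).adjugate i j := by
    funext s
    rw [Matrix.inv_def, Ring.inverse_eq_inv', Matrix.smul_apply, smul_eq_mul]
  rw [this]
  exact ((differentiableAt_det h).inv hdet).mul (differentiableAt_adjugate h i j)

end Aux

/-- if `(X, Y)` solves the linear Hamiltonian system
`Ẋ = AX − BBᵀY`, `Ẏ = −QX − AᵀY` on an open set `U` with `X(t)` invertible on `U`,
then `Π := Y X⁻¹` solves the matrix Riccati equation `−Π̇ = AᵀΠ + ΠA − ΠBBᵀΠ + Q` on `U`. -/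
theorem riccati_of_hamiltonian {n m : ℕ}
    (A Q : ℝ → Matrix (Fin n) (Fin n) ℝ) (B : ℝ → Matrix (Fin n) (Fin m) ℝ)
    (X Y : ℝ → Matrix (Fin n) (Fin n) ℝ)
    (U : Set ℝ) (hU : IsOpen U)
    (hX : ∀ t ∈ U, HasDerivAt X (A t * X t - B t * (B t)ᵀ * Y t) t)
    (hY : ∀ t ∈ U, HasDerivAt Y (-(Q t) * X t - (A t)ᵀ * Y t) t)
    (hXinv : ∀ t ∈ U, IsUnit (X t)) :
    ∀ t ∈ U, HasDerivAt (fun t => Y t * (X t)⁻¹)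
      (-((A t)ᵀ * (Y t * (X t)⁻¹) + (Y t * (X t)⁻¹) * A t
        - (Y t * (X t)⁻¹) * B t * (B t)ᵀ * (Y t * (X t)⁻¹) + Q t)) t := by
  intro t ht
  set Z : ℝ → Matrix (Fin n) (Fin n) ℝ := fun s => (X s)⁻¹ with hZdef
  have hdet : ∀ s ∈ U, IsUnit (X s).det := fun s hs =>
    (Matrix.isUnit_iff_isUnit_det (X s)).1 (hXinv s hs)
  have hdetne : (X t).det ≠ 0 := by
    have := hdet t ht
    simpa [isUnit_iff_ne_zero] using this
  have hXent : ∀ i j, DifferentiableAt ℝ (fun s => X s i j) t := fun i j =>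
    ((hasDerivAt_matrix.1 (hX t ht)) i j).differentiableAt
  have hZdiff : DifferentiableAt ℝ Z t := differentiableAt_inv_matrix hXent hdetne
  obtain ⟨Z', hZ⟩ : ∃ Z', HasDerivAt Z Z' t := ⟨deriv Z t, hZdiff.hasDerivAt⟩
  -- X * Z = 1 on U
  have hone : ∀ s ∈ U, X s * Z s = 1 := fun s hs =>
    Matrix.mul_nonsing_inv (X s) (hdet s hs)
  have hZX : Z t * X t = 1 := Matrix.nonsing_inv_mul (X t) (hdet t ht)
  have hXZ : X t * Z t = 1 := hone t ht
  -- derivative of X * Z is zero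
  have h1 : HasDerivAt (fun s => X s * Z s)
      ((A t * X t - B t * (B t)ᵀ * Y t) * Z t + X t * Z') t :=
    (hX t ht).matrix_mul hZ
  have h2 : HasDerivAt (fun s => X s * Z s) 0 t := by
    have : (fun s => X s * Z s) =ᶠ[nhds t] fun _ => (1 : Matrix (Fin n) (Fin n) ℝ) :=
      Filter.eventuallyEq_of_mem (hU.mem_nhds ht) hone
    exact (hasDerivAt_const t (1 : Matrix (Fin n) (Fin n) ℝ)).congr_of_eventuallyEq this
  have hsum : (A t * X t - B t * (B t)ᵀ * Y t) * Z t + X t * Z' = 0 := h1.unique h2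
  have hZ' : Z' = -(Z t * ((A t * X t - B t * (B t)ᵀ * Y t) * Z t)) := by
    have e2 : Z t * (X t * Z') = Z' := by rw [← mul_assoc, hZX, one_mul]
    have e1 : Z t * ((A t * X t - B t * (B t)ᵀ * Y t) * Z t) + Z t * (X t * Z')
        = Z t * 0 := by rw [← mul_add, hsum]
    rw [mul_zero, e2] at e1
    exact eq_neg_of_add_eq_zero_right e1
  -- derivative of Y * Z
  have hfin : HasDerivAt (fun s => Y s * Z s)
      ((-(Q t) * X t - (A t)ᵀ * Y t) * Z t + Y t * Z') t := (hY t ht).matrix_mul hZ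
  have halg : (-(Q t) * X t - (A t)ᵀ * Y t) * Z t + Y t * Z'
      = -((A t)ᵀ * (Y t * Z t) + (Y t * Z t) * A t
        - (Y t * Z t) * B t * (B t)ᵀ * (Y t * Z t) + Q t) := by
    rw [hZ']
    simp only [sub_mul, add_mul, neg_mul, mul_neg, mul_sub, sub_mul, mul_add, Matrix.mul_assoc]
    rw [hXZ]
    simp only [mul_one]
    abel
  rw [← halg]
  exact hfin
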